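/- For every node Q_i of a 3-dimensional toric idealistic cluster A=(C,m) one has χ_i = D_i − R_i + T_i. -/

import Mathlib

open Finset

/-!
Common framework: 3-dimensional toric constellations and toric idealistic clusters.
The edge labels `1, 2, 3` of the paper are encoded as `0, 1, 2 : Fin 3`.
-/

/-- A 3-dimensional toric constellation: a finite rooted tree on nodes `0, …, r−1`
(node `0` the root, every child having larger index than its parent), each node having
at most three children, the edges from a node to its children carrying pairwise
distinct labels in `Fin 3`.  `label j` is the label of the edge from `parent j` to `j`
(irrelevant for the root). -/
structure ToricConstellation (r : ℕ) where
  parent : Fin r → Fin r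
  label : Fin r → Fin 3
  parent_lt : ∀ i : Fin r, 0 < (i : ℕ) → (parent i : ℕ) < (i : ℕ)
  parent_root : ∀ i : Fin r, (i : ℕ) = 0 → parent i = i
  label_distinct : ∀ i j : Fin r, 0 < (i : ℕ) → 0 < (j : ℕ) → i ≠ j →
    parent i = parent j → label i ≠ label j

namespace ToricConstellation

variable {r : ℕ}

/-- The ordered triple of vectors of `ℤ³` attached to a node: the root carries the
standard basis, and the child along the edge labelled `a` of a node with cone
`(u₁,u₂,u₃)` carries the triple obtained by replacing `u_a` with `u₁+u₂+u₃`. -/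
def cone (C : ToricConstellation r) (i : Fin r) : Fin 3 → (Fin 3 → ℤ) :=
  if h : 0 < (i : ℕ) then
    Function.update (cone C (C.parent i)) (C.label i) (∑ a, cone C (C.parent i) a)
  else fun a => Pi.single a 1
termination_by (i : ℕ)
decreasing_by all_goals exact C.parent_lt i h

/-- `v(Q) = u₁ + u₂ + u₃`, the sum of the cone vectors of a node. -/
def v (C : ToricConstellation r) (i : Fin r) : Fin 3 → ℤ := ∑ a, cone C i a

/-- `Prox C j i` means `j → i`, i.e. `Q_j` is proximate to `Q_i`:
`j ≠ i` and `v(Q_i)` is an entry of `cone(Q_j)`. -/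
def Prox (C : ToricConstellation r) (j i : Fin r) : Prop :=
  j ≠ i ∧ ∃ a : Fin 3, cone C j a = v C i

instance (C : ToricConstellation r) (j i : Fin r) : Decidable (C.Prox j i) := by
  unfold Prox; infer_instance

/-- `inChain C i a b j = true` iff `j = Q_i(a, b^t)` for some `t ≥ 0`, i.e. `j` is
reached from `i` by one edge labelled `a` followed by `t` edges labelled `b`. -/
def inChain (C : ToricConstellation r) (i : Fin r) (a b : Fin 3) (j : Fin r) : Bool :=
  if h : 0 < (j : ℕ) then
    (decide (C.parent j = i) && decide (C.label j = a)) ||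
      (decide (C.label j = b) && inChain C i a b (C.parent j))
  else false
termination_by (j : ℕ)
decreasing_by exact C.parent_lt j h

/-- `LinProx C j i` means `j ↠ i`, i.e. `Q_j` is linearly proximate to `Q_i`. -/
def LinProx (C : ToricConstellation r) (j i : Fin r) : Prop :=
  ∃ a b : Fin 3, a ≠ b ∧ inChain C i a b j = true

instance (C : ToricConstellation r) (j i : Fin r) : Decidable (C.LinProx j i) := by
  unfold LinProx; infer_instance

/-- `j` is a child of `i`. -/
def IsChild (C : ToricConstellation r) (j i : Fin r) : Prop :=
  0 < (j : ℕ) ∧ C.parent j = i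

instance (C : ToricConstellation r) (j i : Fin r) : Decidable (C.IsChild j i) := by
  unfold IsChild; infer_instance

/-- The set `S_i` of labels of the edges on the path from the root to `Q_i`. -/
def labelsUnder (C : ToricConstellation r) (i : Fin r) : Finset (Fin 3) :=
  if h : 0 < (i : ℕ) then insert (C.label i) (labelsUnder C (C.parent i)) else ∅
termination_by (i : ℕ)
decreasing_by exact C.parent_lt i h

/-- `i` is a weak ancestor of `j` (`i = j` or `i` a strict ancestor of `j`). -/
def anc (C : ToricConstellation r) (i j : Fin r) : Bool :=
  decide (i = j) || (if h : 0 < (j : ℕ) then anc C i (C.parent j) else false)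
termination_by (j : ℕ)
decreasing_by exact C.parent_lt j h

/-- The set of nodes weakly above `i` (`i` together with its descendants). -/
def weakAbove (C : ToricConstellation r) (i : Fin r) : Finset (Fin r) :=
  univ.filter (fun j => anc C i j = true)

end ToricConstellation

/-- A 3-dimensional toric cluster: a toric constellation together with a positive
integer weight for each node. -/
structure ToricCluster (r : ℕ) extends ToricConstellation r where
  m : Fin r → ℤ
  m_pos : ∀ j, 0 < m j

namespace ToricCluster

open ToricConstellation

variable {r : ℕ}

/-- `M_{Q_i}(a,b) := Σ_{t ≥ 0, Q_i(a,b^t) ∈ C} m_{Q_i(a,b^t)}`. -/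
def M (A : ToricCluster r) (i : Fin r) (a b : Fin 3) : ℤ :=
  ∑ j ∈ univ.filter (fun j => inChain A.toToricConstellation i a b j = true), A.m j

/-- The cluster is idealistic: the linear proximity inequalities
`M_{Q_i}(a,b) + M_{Q_i}(b,a) ≤ m_{Q_i}` hold. -/
def Idealistic (A : ToricCluster r) : Prop :=
  ∀ i : Fin r, ∀ a b : Fin 3, a ≠ b → A.M i a b + A.M i b a ≤ A.m i

/-- The set of nodes `j` proximate to `i` (`j → i`). -/
def proxSet (A : ToricCluster r) (i : Fin r) : Finset (Fin r) :=
  univ.filter (fun j => Prox A.toToricConstellation j i)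

/-- `B_i`: the set of nodes to which `i` is proximate. -/
def Bset (A : ToricCluster r) (i : Fin r) : Finset (Fin r) :=
  univ.filter (fun j => Prox A.toToricConstellation i j)

/-- `A_i`: the children `k` of `i` for which there is no `l` with `i → l` and `k → l`. -/
def Aset (A : ToricCluster r) (i : Fin r) : Finset (Fin r) :=
  univ.filter (fun k => IsChild A.toToricConstellation k i ∧
    ¬ ∃ l, Prox A.toToricConstellation i l ∧ Prox A.toToricConstellation k l)

/-- The Euler characteristic `χ_i = χ(E_i°)`. -/
def chi (A : ToricCluster r) (i : Fin r) : ℤ :=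
  3 + A.m i * (A.m i - 3)
    - ∑ j ∈ A.proxSet i, A.m j * (A.m j - 1)
    + ∑ j ∈ A.proxSet i,
        (A.m j - ∑ k ∈ (A.proxSet i).filter
          (fun k => LinProx A.toToricConstellation k j), A.m k)
    + ∑ j ∈ A.Bset i,
        (A.m i - ∑ k ∈ (A.proxSet j).filter
          (fun k => LinProx A.toToricConstellation k i), A.m k)
    - ((A.Aset i).card : ℤ) - 2 * ((A.Bset i).card : ℤ)
    + (((A.Bset i).card.choose 2 : ℕ) : ℤ)

/-- `D_i = m_i² − Σ_{j→i} m_j²`. -/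
def D (A : ToricCluster r) (i : Fin r) : ℤ :=
  A.m i ^ 2 - ∑ j ∈ A.proxSet i, A.m j ^ 2

/-- `r_{ab} = m_i − M_{Q_i}(a,b) − M_{Q_i}(b,a)`. -/
def rab (A : ToricCluster r) (i : Fin r) (a b : Fin 3) : ℤ :=
  A.m i - A.M i a b - A.M i b a

/-- `R_i = r̂_{12} + r̂_{13} + r̂_{23}`, where `r̂_{ab} = r_{ab}` if the remaining third
label does not appear under `Q_i`, and `r̂_{ab} = 0` otherwise.  (Labels `1,2,3` are
encoded as `0,1,2 : Fin 3`.) -/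
def R (A : ToricCluster r) (i : Fin r) : ℤ :=
  (if (2 : Fin 3) ∉ labelsUnder A.toToricConstellation i then A.rab i 0 1 else 0)
  + (if (1 : Fin 3) ∉ labelsUnder A.toToricConstellation i then A.rab i 0 2 else 0)
  + (if (0 : Fin 3) ∉ labelsUnder A.toToricConstellation i then A.rab i 1 2 else 0)

/-- `T_i = 3 − #A_i − 2·#B_i + (#B_i choose 2)`. -/
def T (A : ToricCluster r) (i : Fin r) : ℤ :=
  3 - ((A.Aset i).card : ℤ) - 2 * ((A.Bset i).card : ℤ)
    + (((A.Bset i).card.choose 2 : ℕ) : ℤ)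

/-- The nodes to which `i` is proximate, of smaller index: the sums in the recursive
definitions of the numerical data range over the nodes to which `i` is proximate,
which are ancestors of `i` and hence have smaller index (making the recursion
well-founded). -/
def anteSet (A : ToricCluster r) (i : Fin r) : Finset (Fin r) :=
  univ.filter (fun j => (j : ℕ) < (i : ℕ) ∧ Prox A.toToricConstellation i j)

/-- The numerical datum `N_i := m_i + Σ_{j : i→j} N_j`. -/
def N (A : ToricCluster r) (i : Fin r) : ℤ :=
  A.m i + ∑ j ∈ (A.anteSet i).attach, N A j.1
termination_by (i : ℕ)
decreasing_by
  have hj := j.2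
  simp only [anteSet, Finset.mem_filter] at hj
  exact hj.2.1

/-- The numerical datum `ν_i := 3 + Σ_{j : i→j} (ν_j − 1)`. -/
def nu (A : ToricCluster r) (i : Fin r) : ℤ :=
  3 + ∑ j ∈ (A.anteSet i).attach, (nu A j.1 - 1)
termination_by (i : ℕ)
decreasing_by
  have hj := j.2
  simp only [anteSet, Finset.mem_filter] at hj
  exact hj.2.1

end ToricCluster


open ToricConstellation ToricCluster

namespace ToricConstellation

variable {r : ℕ}

lemma strongRecFin {P : Fin r → Prop}
    (h : ∀ k : Fin r, (∀ j : Fin r, (j : ℕ) < (k : ℕ) → P j) → P k) : ∀ k, P k := by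
  have H : ∀ n : ℕ, ∀ k : Fin r, (k : ℕ) < n → P k := by
    intro n
    induction n with
    | zero => intro k hk; exact absurd hk (Nat.not_lt_zero _)
    | succ n IH => intro k _; exact h k (fun j hj => IH j (by omega))
  exact fun k => H ((k : ℕ) + 1) k (by omega)

variable (C : ToricConstellation r)

lemma anc_iff (i j : Fin r) :
    C.anc i j = true ↔ (i = j ∨ (0 < (j : ℕ) ∧ C.anc i (C.parent j) = true)) := by
  conv_lhs => rw [anc]
  by_cases h : 0 < (j : ℕ) <;> simp [h]

variable {C}

lemma anc_refl (i : Fin r) : C.anc i i = true := (C.anc_iff i i).2 (Or.inl rfl)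

lemma anc_parent {i j : Fin r} (h : C.anc i j = true) (hne : i ≠ j) :
    C.anc i (C.parent j) = true := by
  rcases (C.anc_iff i j).1 h with h' | h'
  · exact absurd h' hne
  · exact h'.2

lemma anc_pos {i j : Fin r} (h : C.anc i j = true) (hne : i ≠ j) : 0 < (j : ℕ) := by
  rcases (C.anc_iff i j).1 h with h' | h'
  · exact absurd h' hne
  · exact h'.1

lemma anc_le {i j : Fin r} (h : C.anc i j = true) : (i : ℕ) ≤ (j : ℕ) := by
  induction j using strongRecFin with
  | _ j IH =>
    rcases (C.anc_iff i j).1 h with h' | h'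
    · exact h' ▸ le_refl _
    · exact le_trans (IH _ (C.parent_lt j h'.1) h'.2) (le_of_lt (C.parent_lt j h'.1))

lemma anc_lt {i j : Fin r} (h : C.anc i j = true) (hne : i ≠ j) : (i : ℕ) < (j : ℕ) := by
  have h1 := anc_le (anc_parent h hne)
  have h2 := C.parent_lt j (anc_pos h hne)
  omega

lemma anc_antisymm {i j : Fin r} (h1 : C.anc i j = true) (h2 : C.anc j i = true) : i = j :=
  Fin.ext (le_antisymm (anc_le h1) (anc_le h2))

lemma anc_step {j : Fin r} (h0 : 0 < (j : ℕ)) : C.anc (C.parent j) j = true :=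
  (C.anc_iff _ j).2 (Or.inr ⟨h0, anc_refl _⟩)

lemma anc_trans {i j k : Fin r} (h1 : C.anc i j = true) (h2 : C.anc j k = true) :
    C.anc i k = true := by
  induction k using strongRecFin with
  | _ k IH =>
    rcases (C.anc_iff j k).1 h2 with h' | h'
    · exact h' ▸ h1
    · exact (C.anc_iff i k).2 (Or.inr ⟨h'.1, IH _ (C.parent_lt k h'.1) h'.2⟩)

lemma anc_comp {x y k : Fin r} (hx : C.anc x k = true) (hy : C.anc y k = true) :
    C.anc x y = true ∨ C.anc y x = true := by
  induction k using strongRecFin with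
  | _ k IH =>
    rcases (C.anc_iff x k).1 hx with h' | h'
    · exact Or.inr (h' ▸ hy)
    · rcases (C.anc_iff y k).1 hy with h'' | h''
      · exact Or.inl (h'' ▸ hx)
      · exact IH _ (C.parent_lt k h'.1) h'.2 h''.2

/-- If `x` is a child of `i` and `y` is an ancestor of `x` below `i`, then `y = i` or `y = x`. -/
lemma anc_child {i x y : Fin r} (hx0 : 0 < (x : ℕ)) (hpx : C.parent x = i)
    (hy : C.anc i y = true) (hyx : C.anc y x = true) : y = i ∨ y = x := by
  by_cases hxy : y = x
  · exact Or.inr hxy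
  · have := anc_parent hyx hxy
    rw [hpx] at this
    exact Or.inl (anc_antisymm this hy)

/-- Two children of `i` that are both ancestors of `k` coincide. -/
lemma child_unique {i x y k : Fin r} (hx0 : 0 < (x : ℕ)) (hpx : C.parent x = i)
    (hy0 : 0 < (y : ℕ)) (hpy : C.parent y = i)
    (hxk : C.anc x k = true) (hyk : C.anc y k = true) : x = y := by
  have hix : C.anc i x = true := hpx ▸ anc_step hx0
  have hiy : C.anc i y = true := hpy ▸ anc_step hy0
  have hxi : (i : ℕ) < (x : ℕ) := hpx ▸ C.parent_lt x hx0
  have hyi : (i : ℕ) < (y : ℕ) := hpy ▸ C.parent_lt y hy0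
  rcases anc_comp hxk hyk with h | h
  · rcases anc_child hy0 hpy hix h with h' | h'
    · exact absurd (h' ▸ hxi) (lt_irrefl _)
    · exact h'
  · rcases anc_child hx0 hpx hiy h with h' | h'
    · exact absurd (h' ▸ hyi) (lt_irrefl _)
    · exact h'.symm

end ToricConstellation
namespace ToricConstellation

variable {r : ℕ}

/-- The deepest weak ancestor of `i` (of positive index) carrying label `c`, if any. -/
def orig (C : ToricConstellation r) (i : Fin r) (c : Fin 3) : Option (Fin r) :=
  if h : 0 < (i : ℕ) then
    (if C.label i = c then some i else orig C (C.parent i) c)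
  else none
termination_by (i : ℕ)
decreasing_by exact C.parent_lt i h

/-- The labels on the path from `i` (exclusive) down to `k` (inclusive). -/
def labelsDN (C : ToricConstellation r) (i k : Fin r) : Finset (Fin 3) :=
  if h : 0 < (k : ℕ) ∧ k ≠ i then insert (C.label k) (labelsDN C i (C.parent k)) else ∅
termination_by (k : ℕ)
decreasing_by exact C.parent_lt k h.1

/-- The nearest strict ancestor of `k` with a different label (or the root region). -/
def stem (C : ToricConstellation r) (k : Fin r) : Fin r :=
  if h : 0 < (k : ℕ) then
    (if C.label (C.parent k) = C.label k ∧ 0 < ((C.parent k) : ℕ) then stem C (C.parent k)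
     else C.parent k)
  else k
termination_by (k : ℕ)
decreasing_by exact C.parent_lt k h

variable {C : ToricConstellation r}

lemma orig_zero {i : Fin r} (h : ¬ 0 < (i : ℕ)) (c : Fin 3) : C.orig i c = none := by
  rw [orig]; simp [h]

lemma orig_pos_label {i : Fin r} (h : 0 < (i : ℕ)) (hc : C.label i = c) :
    C.orig i c = some i := by
  rw [orig]; simp [h, hc]

lemma orig_pos_ne {i : Fin r} (h : 0 < (i : ℕ)) (hc : C.label i ≠ c) :
    C.orig i c = C.orig (C.parent i) c := by
  rw [orig]; simp [h, hc]

lemma orig_spec {k x : Fin r} {c : Fin 3} (h : C.orig k c = some x) :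
    C.label x = c ∧ 0 < (x : ℕ) ∧ C.anc x k = true := by
  induction k using strongRecFin with
  | _ k IH =>
    by_cases h0 : 0 < (k : ℕ)
    · by_cases hc : C.label k = c
      · rw [orig_pos_label h0 hc] at h
        cases h
        exact ⟨hc, h0, anc_refl _⟩
      · rw [orig_pos_ne h0 hc] at h
        obtain ⟨h1, h2, h3⟩ := IH _ (C.parent_lt k h0) h
        exact ⟨h1, h2, anc_trans h3 (anc_step h0)⟩
    · rw [orig_zero h0] at h; cases h

lemma orig_no_later {k x z : Fin r} {c : Fin 3} (h : C.orig k c = some x)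
    (h1 : C.anc x z = true) (h2 : C.anc z k = true) (h3 : z ≠ x) : C.label z ≠ c := by
  induction k using strongRecFin with
  | _ k IH =>
    by_cases h0 : 0 < (k : ℕ)
    · by_cases hc : C.label k = c
      · rw [orig_pos_label h0 hc] at h
        cases h
        exact absurd (anc_antisymm h2 h1) h3
      · rw [orig_pos_ne h0 hc] at h
        by_cases hzk : z = k
        · exact hzk ▸ hc
        · exact IH _ (C.parent_lt k h0) h (anc_parent h2 hzk)
    · rw [orig_zero h0] at h; cases h

lemma orig_mono {j k x : Fin r} {c : Fin 3} (hjk : C.anc j k = true)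
    (hxj : C.anc x j = true) (h : C.orig k c = some x) : C.orig j c = some x := by
  induction k using strongRecFin with
  | _ k IH =>
    by_cases hkj : k = j
    · exact hkj ▸ h
    · have h0 : 0 < (k : ℕ) := anc_pos hjk (Ne.symm hkj)
      by_cases hc : C.label k = c
      · rw [orig_pos_label h0 hc] at h
        have hkx : k = x := Option.some_inj.mp h
        subst hkx
        exact absurd (anc_antisymm hjk hxj).symm hkj
      · rw [orig_pos_ne h0 hc] at h
        exact IH _ (C.parent_lt k h0) (anc_parent hjk (Ne.symm hkj)) h

lemma orig_extend {i k x : Fin r} {c : Fin 3} (hik : C.anc i k = true)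
    (h : C.orig i c = some x)
    (hno : ∀ z, C.anc i z = true → C.anc z k = true → z ≠ i → C.label z ≠ c) :
    C.orig k c = some x := by
  induction k using strongRecFin with
  | _ k IH =>
    by_cases hki : k = i
    · exact hki ▸ h
    · have h0 : 0 < (k : ℕ) := anc_pos hik (fun h' => hki h'.symm)
      have hlk : C.label k ≠ c := hno k hik (anc_refl _) hki
      rw [orig_pos_ne h0 hlk]
      exact IH _ (C.parent_lt k h0) (anc_parent hik (fun h' => hki h'.symm))
        (fun z hz1 hz2 hz3 => hno z hz1 (anc_trans hz2 (anc_step h0)) hz3)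

lemma mem_labelsUnder_iff {i : Fin r} {c : Fin 3} :
    c ∈ C.labelsUnder i ↔ ∃ x, C.orig i c = some x := by
  induction i using strongRecFin with
  | _ i IH =>
    by_cases h0 : 0 < (i : ℕ)
    · rw [labelsUnder]
      by_cases hc : C.label i = c
      · simp [h0, hc, orig_pos_label h0 hc]
      · rw [orig_pos_ne h0 hc]
        simp only [dif_pos h0, Finset.mem_insert]
        rw [IH _ (C.parent_lt i h0)]
        simp [Ne.symm hc]
    · rw [labelsUnder, orig_zero h0]
      simp [h0]

lemma labelsDN_self (i : Fin r) : C.labelsDN i i = ∅ := by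
  rw [labelsDN]; simp

lemma labelsDN_step {i k : Fin r} (h0 : 0 < (k : ℕ)) (hne : k ≠ i) :
    C.labelsDN i k = insert (C.label k) (C.labelsDN i (C.parent k)) := by
  rw [labelsDN]; simp [h0, hne]

lemma mem_labelsDN_iff {i k : Fin r} (hik : C.anc i k = true) {c : Fin 3} :
    c ∈ C.labelsDN i k ↔
      ∃ y, C.anc i y = true ∧ C.anc y k = true ∧ y ≠ i ∧ C.label y = c := by
  induction k using strongRecFin with
  | _ k IH =>
    by_cases hki : k = i
    · subst hki
      rw [labelsDN_self]
      simp only [Finset.notMem_empty, false_iff]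
      rintro ⟨y, hy1, hy2, hy3, _⟩
      exact hy3 (anc_antisymm hy2 hy1)
    · have h0 : 0 < (k : ℕ) := anc_pos hik (fun h' => hki h'.symm)
      rw [labelsDN_step h0 hki, Finset.mem_insert,
        IH _ (C.parent_lt k h0) (anc_parent hik (fun h' => hki h'.symm))]
      constructor
      · rintro (rfl | ⟨y, hy1, hy2, hy3, hy4⟩)
        · exact ⟨k, hik, anc_refl _, hki, rfl⟩
        · exact ⟨y, hy1, anc_trans hy2 (anc_step h0), hy3, hy4⟩
      · rintro ⟨y, hy1, hy2, hy3, hy4⟩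
        by_cases hyk : y = k
        · subst hyk; exact Or.inl hy4.symm
        · exact Or.inr ⟨y, hy1, anc_parent hy2 hyk, hy3, hy4⟩

end ToricConstellation
namespace ToricConstellation

variable {r : ℕ} {C : ToricConstellation r}

lemma stem_rec {k : Fin r} (h : 0 < (k : ℕ))
    (hc : C.label (C.parent k) = C.label k ∧ 0 < ((C.parent k) : ℕ)) :
    C.stem k = C.stem (C.parent k) := by
  rw [stem]; simp [h, hc.1, hc.2]

lemma stem_stop {k : Fin r} (h : 0 < (k : ℕ))
    (hc : ¬ (C.label (C.parent k) = C.label k ∧ 0 < ((C.parent k) : ℕ))) :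
    C.stem k = C.parent k := by
  rw [stem]; rw [dif_pos h, if_neg hc]

lemma stem_lt {k : Fin r} (h : 0 < (k : ℕ)) : ((C.stem k : ℕ) < (k : ℕ)) ∧
    C.anc (C.stem k) k = true := by
  induction k using strongRecFin with
  | _ k IH =>
    by_cases hc : C.label (C.parent k) = C.label k ∧ 0 < ((C.parent k) : ℕ)
    · rw [stem_rec h hc]
      obtain ⟨h1, h2⟩ := IH _ (C.parent_lt k h) hc.2
      exact ⟨lt_trans h1 (C.parent_lt k h), anc_trans h2 (anc_step h)⟩
    · rw [stem_stop h hc]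
      exact ⟨C.parent_lt k h, anc_step h⟩

lemma stem_labels {k : Fin r} (h : 0 < (k : ℕ)) :
    ∀ z, C.anc (C.stem k) z = true → C.anc z k = true → z ≠ C.stem k →
      C.label z = C.label k := by
  induction k using strongRecFin with
  | _ k IH =>
    intro z hz1 hz2 hz3
    by_cases hc : C.label (C.parent k) = C.label k ∧ 0 < ((C.parent k) : ℕ)
    · rw [stem_rec h hc] at hz1 hz3
      by_cases hzk : z = k
      · exact hzk ▸ rfl
      · rw [← hc.1]
        exact IH _ (C.parent_lt k h) hc.2 z hz1 (anc_parent hz2 hzk) hz3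
    · rw [stem_stop h hc] at hz1 hz3
      by_cases hzk : z = k
      · exact hzk ▸ rfl
      · exact absurd (anc_antisymm (anc_parent hz2 hzk) hz1) hz3
  
lemma stem_label_ne {k : Fin r} (h : 0 < (k : ℕ)) (hs : 0 < ((C.stem k) : ℕ)) :
    C.label (C.stem k) ≠ C.label k := by
  induction k using strongRecFin with
  | _ k IH =>
    by_cases hc : C.label (C.parent k) = C.label k ∧ 0 < ((C.parent k) : ℕ)
    · rw [stem_rec h hc] at hs ⊢
      rw [← hc.1]
      exact IH _ (C.parent_lt k h) hc.2 hs
    · rw [stem_stop h hc] at hs ⊢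
      intro he
      exact hc ⟨he, hs⟩

lemma stem_unique {k w : Fin r} (h : 0 < (k : ℕ)) (hwk : C.anc w k = true) (hne : w ≠ k)
    (hlab : C.label w ≠ C.label k)
    (hall : ∀ z, C.anc w z = true → C.anc z k = true → z ≠ w → C.label z = C.label k) :
    C.stem k = w := by
  induction k using strongRecFin with
  | _ k IH =>
    by_cases hc : C.label (C.parent k) = C.label k ∧ 0 < ((C.parent k) : ℕ)
    · rw [stem_rec h hc]
      by_cases hwp : w = C.parent k
      · exact absurd (hwp ▸ hc.1) hlab
      · refine IH _ (C.parent_lt k h) hc.2 (anc_parent hwk hne) hwp (hc.1 ▸ hlab) ?_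
        intro z hz1 hz2 hz3
        exact hc.1 ▸ hall z hz1 (anc_trans hz2 (anc_step h)) hz3
    · rw [stem_stop h hc]
      by_cases hwp : w = C.parent k
      · exact hwp.symm
      · exfalso
        have hp : C.anc w (C.parent k) = true := anc_parent hwk hne
        have := hall (C.parent k) hp (anc_step h) (fun h' => hwp h'.symm)
        have hp0 : 0 < ((C.parent k) : ℕ) := by
          by_contra h0
          have : (w : ℕ) ≤ ((C.parent k) : ℕ) := anc_le hp
          have hw0 : ¬ 0 < (w : ℕ) := by omega
          -- w = parent k = 0 as values, contradiction with hwp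
          exact hwp (Fin.ext (by omega))
        exact hc ⟨this, hp0⟩

end ToricConstellation
namespace ToricConstellation

variable {r : ℕ} {C : ToricConstellation r}

lemma inChain_iff (i k : Fin r) (a b : Fin 3) :
    C.inChain i a b k = true ↔
      0 < (k : ℕ) ∧ ((C.parent k = i ∧ C.label k = a) ∨
        (C.label k = b ∧ C.inChain i a b (C.parent k) = true)) := by
  conv_lhs => rw [inChain]
  by_cases h : 0 < (k : ℕ) <;> simp [h]

lemma inChain_low {i y : Fin r} {a b : Fin 3} (h : (y : ℕ) ≤ (i : ℕ)) :
    C.inChain i a b y ≠ true := by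
  induction y using strongRecFin with
  | _ y IH =>
    intro hc
    rcases ((inChain_iff i y a b).1 hc) with ⟨h0, h1 | h1⟩
    · have := C.parent_lt y h0
      rw [h1.1] at this
      omega
    · have hp := C.parent_lt y h0
      exact IH _ hp (by omega) h1.2

lemma inChain_spec {i k : Fin r} {a b : Fin 3} (h : C.inChain i a b k = true) :
    0 < (k : ℕ) ∧ C.anc i k = true ∧ (i : ℕ) < (k : ℕ) := by
  induction k using strongRecFin with
  | _ k IH =>
    rcases ((inChain_iff i k a b).1 h) with ⟨h0, h1 | h1⟩
    · exact ⟨h0, h1.1 ▸ anc_step h0, h1.1 ▸ C.parent_lt k h0⟩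
    · obtain ⟨_, ha, hl⟩ := IH _ (C.parent_lt k h0) h1.2
      exact ⟨h0, anc_trans ha (anc_step h0), lt_trans hl (C.parent_lt k h0)⟩

lemma inChain_build {i w k : Fin r} {a b : Fin 3} (hw0 : 0 < (w : ℕ))
    (hpw : C.parent w = i) (hlw : C.label w = a) (hwk : C.anc w k = true)
    (hall : ∀ z, C.anc w z = true → C.anc z k = true → z ≠ w → C.label z = b) :
    C.inChain i a b k = true := by
  induction k using strongRecFin with
  | _ k IH =>
    by_cases hkw : k = w
    · subst hkw
      exact (inChain_iff i k a b).2 ⟨hw0, Or.inl ⟨hpw, hlw⟩⟩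
    · have h0 : 0 < (k : ℕ) := by
        by_contra h0
        have := anc_le hwk; omega
      refine (inChain_iff i k a b).2 ⟨h0, Or.inr ⟨hall k hwk (anc_refl _) hkw, ?_⟩⟩
      exact IH _ (C.parent_lt k h0) (anc_parent hwk (Ne.symm hkw))
        (fun z hz1 hz2 hz3 => hall z hz1 (anc_trans hz2 (anc_step h0)) hz3)

lemma chain_climb {i k : Fin r} {a b : Fin 3} (h : C.inChain i a b k = true) :
    (C.parent k = i ∧ C.label k = a) ∨
      ∃ w : Fin r, 0 < (w : ℕ) ∧ C.parent w = i ∧ C.label w = a ∧ C.anc w k = true ∧ w ≠ k ∧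
        (∀ z, C.anc w z = true → C.anc z k = true → z ≠ w → C.label z = b) := by
  induction k using strongRecFin with
  | _ k IH =>
    rcases ((inChain_iff i k a b).1 h) with ⟨h0, h1 | h1⟩
    · exact Or.inl h1
    · rcases IH _ (C.parent_lt k h0) h1.2 with h2 | h2
      · refine Or.inr ⟨C.parent k, ?_, h2.1, h2.2, anc_step h0, ?_, ?_⟩
        · rcases ((inChain_iff i (C.parent k) a b).1 h1.2) with ⟨hp0, _⟩
          exact hp0
        · exact fun he => absurd (he ▸ C.parent_lt k h0) (lt_irrefl _)
        · intro z hz1 hz2 hz3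
          have : z = k := by
            rcases (C.anc_iff z k).1 hz2 with h' | h'
            · exact h'
            · exact absurd (anc_antisymm h'.2 hz1) hz3
          exact this ▸ h1.1
      · obtain ⟨w, hw0, hw1, hw2, hw3, hw4, hw5⟩ := h2
        refine Or.inr ⟨w, hw0, hw1, hw2, anc_trans hw3 (anc_step h0), ?_, ?_⟩
        · intro he
          have h4 := anc_le hw3
          have h5 := C.parent_lt k h0
          rw [he] at h4
          omega
        · intro z hz1 hz2 hz3
          by_cases hzk : z = k
          · exact hzk ▸ h1.1
          · exact hw5 z hz1 (anc_parent hz2 hzk) hz3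

/-- From a chain membership, produce the `orig` witness for proximity. -/
lemma inChain_orig {i k : Fin r} {a b : Fin 3} (hab : a ≠ b) (h : C.inChain i a b k = true) :
    ∃ x : Fin r, 0 < (x : ℕ) ∧ C.parent x = i ∧ C.label x = a ∧ C.orig k a = some x := by
  induction k using strongRecFin with
  | _ k IH =>
    rcases ((inChain_iff i k a b).1 h) with ⟨h0, h1 | h1⟩
    · exact ⟨k, h0, h1.1, h1.2, orig_pos_label h0 h1.2⟩
    · obtain ⟨x, hx0, hx1, hx2, hx3⟩ := IH _ (C.parent_lt k h0) h1.2
      refine ⟨x, hx0, hx1, hx2, ?_⟩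
      rw [orig_pos_ne h0 (by rw [h1.1]; exact fun he => hab he.symm)]
      exact hx3

/-- The labels on the path `(i,k]` of a chain all lie in `{a, b}`. -/
lemma inChain_labels {i k : Fin r} {a b : Fin 3} (h : C.inChain i a b k = true) :
    ∀ c ∈ C.labelsDN i k, c = a ∨ c = b := by
  induction k using strongRecFin with
  | _ k IH =>
    intro c hc
    rcases ((inChain_iff i k a b).1 h) with ⟨h0, h1 | h1⟩
    · have hki : k ≠ i := by
        have := C.parent_lt k h0; rw [h1.1] at this
        exact fun he => absurd (he ▸ this) (lt_irrefl _)
      rw [labelsDN_step h0 hki, h1.1, labelsDN_self] at hc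
      simp only [Finset.mem_insert, Finset.notMem_empty, or_false] at hc
      exact Or.inl (hc ▸ h1.2)
    · have hki : k ≠ i := by
        obtain ⟨_, _, hl⟩ := inChain_spec h
        exact fun he => absurd (he ▸ hl) (lt_irrefl _)
      rw [labelsDN_step h0 hki] at hc
      rcases Finset.mem_insert.1 hc with hc' | hc'
      · exact Or.inr (hc' ▸ h1.1)
      · exact IH _ (C.parent_lt k h0) h1.2 c hc'

end ToricConstellation
namespace ToricConstellation

variable {r : ℕ} {C : ToricConstellation r}

/-- 3×3 determinant of rows. -/
def det3 (u v w : Fin 3 → ℤ) : ℤ :=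
  u 0 * (v 1 * w 2 - v 2 * w 1) - u 1 * (v 0 * w 2 - v 2 * w 0)
    + u 2 * (v 0 * w 1 - v 1 * w 0)

/-- Coordinate total of a vector. -/
def tot (w : Fin 3 → ℤ) : ℤ := w 0 + w 1 + w 2

lemma fin3cases : ∀ c : Fin 3, c = 0 ∨ c = 1 ∨ c = 2 := by decide

lemma cone_zero {i : Fin r} (h : ¬ 0 < (i : ℕ)) : C.cone i = fun a => Pi.single a 1 := by
  rw [cone]; simp [h]

lemma cone_step {i : Fin r} (h : 0 < (i : ℕ)) :
    C.cone i = Function.update (C.cone (C.parent i)) (C.label i) (C.v (C.parent i)) := by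
  rw [cone]; simp [h]; rfl

lemma v_apply (i : Fin r) (t : Fin 3) :
    C.v i t = C.cone i 0 t + C.cone i 1 t + C.cone i 2 t := by
  show (∑ a, C.cone i a) t = _
  rw [Fin.sum_univ_three]; rfl

lemma cone_nonneg (i : Fin r) : ∀ c t, 0 ≤ C.cone i c t := by
  induction i using strongRecFin with
  | _ i IH =>
    intro c t
    by_cases h : 0 < (i : ℕ)
    · rw [cone_step h]
      by_cases hc : c = C.label i
      · subst hc
        rw [Function.update_self, v_apply]
        have h0 := IH _ (C.parent_lt i h) 0 t
        have h1 := IH _ (C.parent_lt i h) 1 t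
        have h2 := IH _ (C.parent_lt i h) 2 t
        linarith
      · rw [Function.update_of_ne hc]
        exact IH _ (C.parent_lt i h) c t
    · rw [cone_zero h]
      rcases fin3cases c with rfl | rfl | rfl <;> rcases fin3cases t with rfl | rfl | rfl <;>
        simp [Pi.single_apply]

lemma cone_tot_pos (i : Fin r) : ∀ c, 1 ≤ tot (C.cone i c) := by
  induction i using strongRecFin with
  | _ i IH =>
    intro c
    by_cases h : 0 < (i : ℕ)
    · rw [cone_step h]
      by_cases hc : c = C.label i
      · subst hc
        rw [Function.update_self]
        have h0 := IH _ (C.parent_lt i h) 0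
        have h1 := IH _ (C.parent_lt i h) 1
        have h2 := IH _ (C.parent_lt i h) 2
        have : tot (C.v (C.parent i)) =
            tot (C.cone (C.parent i) 0) + tot (C.cone (C.parent i) 1)
              + tot (C.cone (C.parent i) 2) := by
          simp only [tot, v_apply]; ring
        rw [this]; linarith
      · rw [Function.update_of_ne hc]
        exact IH _ (C.parent_lt i h) c
    · rw [cone_zero h]
      rcases fin3cases c with rfl | rfl | rfl <;> simp [tot, Pi.single_apply]

lemma v_tot_ge (i : Fin r) : 3 ≤ tot (C.v i) := by
  have h0 := cone_tot_pos (C := C) i 0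
  have h1 := cone_tot_pos (C := C) i 1
  have h2 := cone_tot_pos (C := C) i 2
  have : tot (C.v i) = tot (C.cone i 0) + tot (C.cone i 1) + tot (C.cone i 2) := by
    simp only [tot, v_apply]; ring
  rw [this]; linarith

lemma v_tot_parent_lt {j : Fin r} (h : 0 < (j : ℕ)) :
    tot (C.v (C.parent j)) < tot (C.v j) := by
  set p := C.parent j
  have hsplit : tot (C.v j) = tot (C.cone j 0) + tot (C.cone j 1) + tot (C.cone j 2) := by
    simp only [tot, v_apply]; ring
  have hsplitp : tot (C.v p) = tot (C.cone p 0) + tot (C.cone p 1) + tot (C.cone p 2) := by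
    simp only [tot, v_apply]; ring
  have h0 := cone_tot_pos (C := C) p 0
  have h1 := cone_tot_pos (C := C) p 1
  have h2 := cone_tot_pos (C := C) p 2
  rw [cone_step h] at hsplit
  rcases fin3cases (C.label j) with he | he | he <;> rw [he] at hsplit <;>
    simp only [Function.update_self,
      Function.update_of_ne (show (0:Fin 3) ≠ 1 by decide),
      Function.update_of_ne (show (0:Fin 3) ≠ 2 by decide),
      Function.update_of_ne (show (1:Fin 3) ≠ 0 by decide),
      Function.update_of_ne (show (1:Fin 3) ≠ 2 by decide),
      Function.update_of_ne (show (2:Fin 3) ≠ 0 by decide),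
      Function.update_of_ne (show (2:Fin 3) ≠ 1 by decide)] at hsplit <;>
    linarith

lemma v_tot_anc_lt {i j : Fin r} (h : C.anc i j = true) (hne : i ≠ j) :
    tot (C.v i) < tot (C.v j) := by
  induction j using strongRecFin with
  | _ j IH =>
    have h0 : 0 < (j : ℕ) := anc_pos h hne
    have hp := anc_parent h hne
    by_cases hip : i = C.parent j
    · rw [hip]; exact v_tot_parent_lt h0
    · exact lt_trans (IH _ (C.parent_lt j h0) hp hip) (v_tot_parent_lt h0)

lemma det3_cone (i : Fin r) : det3 (C.cone i 0) (C.cone i 1) (C.cone i 2) = 1 := by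
  induction i using strongRecFin with
  | _ i IH =>
    by_cases h : 0 < (i : ℕ)
    · rw [cone_step h]
      have hv : ∀ t, C.v (C.parent i) t = C.cone (C.parent i) 0 t
          + C.cone (C.parent i) 1 t + C.cone (C.parent i) 2 t := v_apply _
      have hIH := IH _ (C.parent_lt i h)
      rcases fin3cases (C.label i) with he | he | he <;> rw [he] <;>
        simp only [det3, Function.update_self,
          Function.update_of_ne (show (0:Fin 3) ≠ 1 by decide),
          Function.update_of_ne (show (0:Fin 3) ≠ 2 by decide),
          Function.update_of_ne (show (1:Fin 3) ≠ 0 by decide),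
          Function.update_of_ne (show (1:Fin 3) ≠ 2 by decide),
          Function.update_of_ne (show (2:Fin 3) ≠ 0 by decide),
          Function.update_of_ne (show (2:Fin 3) ≠ 1 by decide), hv] <;>
        simp only [det3] at hIH <;> linarith [hIH]
    · rw [cone_zero h]; simp only [det3, Pi.single_apply]; decide

lemma coords_unique {u0 u1 u2 : Fin 3 → ℤ} (hdet : det3 u0 u1 u2 = 1)
    {c e : Fin 3 → ℤ}
    (h : ∀ t, c 0 * u0 t + c 1 * u1 t + c 2 * u2 t
      = e 0 * u0 t + e 1 * u1 t + e 2 * u2 t) : ∀ d, c d = e d := by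
  have h0 := h 0
  have h1 := h 1
  have h2 := h 2
  simp only [det3] at hdet
  intro d
  rcases fin3cases d with rfl | rfl | rfl
  · linear_combination (u1 1 * u2 2 - u1 2 * u2 1) * h0 - (u1 0 * u2 2 - u1 2 * u2 0) * h1
      + (u1 0 * u2 1 - u1 1 * u2 0) * h2 - (c 0 - e 0) * hdet
  · linear_combination (-(u0 1 * u2 2 - u0 2 * u2 1)) * h0 + (u0 0 * u2 2 - u0 2 * u2 0) * h1
      - (u0 0 * u2 1 - u0 1 * u2 0) * h2 - (c 1 - e 1) * hdet
  · linear_combination (u0 1 * u1 2 - u0 2 * u1 1) * h0 - (u0 0 * u1 2 - u0 2 * u1 0) * h1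
      + (u0 0 * u1 1 - u0 1 * u1 0) * h2 - (c 2 - e 2) * hdet

end ToricConstellation
namespace ToricConstellation

variable {r : ℕ} {C : ToricConstellation r}

/-- Coordinates of the cone vectors of any weak descendant `j` of the child `x` of `p`,
in the basis `cone p`, together with the positivity/separation inequalities. -/
lemma subtree_coords {p x : Fin r} (hx0 : 0 < (x : ℕ)) (hpx : C.parent x = p)
    {j : Fin r} (hxj : C.anc x j = true) :
    ∃ lam : Fin 3 → Fin 3 → ℤ,
      (∀ c t, C.cone j c t = lam c 0 * C.cone p 0 t + lam c 1 * C.cone p 1 t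
          + lam c 2 * C.cone p 2 t) ∧
      (∀ c d, 0 ≤ lam c (C.label x) ∧ lam c (C.label x) ≤ lam c d) ∧
      (∃ c, 1 ≤ lam c (C.label x)) ∧
      (∀ d, d ≠ C.label x → ∃ c, lam c (C.label x) + 1 ≤ lam c d) := by
  induction j using strongRecFin with
  | _ j IH =>
    by_cases hjx : j = x
    · subst hjx
      have H : ∀ a : Fin 3,
          (∀ c d : Fin 3, 0 ≤ (if c = a then (1:ℤ) else if a = c then 1 else 0) ∧
            ((if c = a then (1:ℤ) else if a = c then 1 else 0) ≤
              (if c = a then 1 else if d = c then 1 else 0))) ∧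
          (∃ c : Fin 3, 1 ≤ (if c = a then (1:ℤ) else if a = c then 1 else 0)) ∧
          (∀ d : Fin 3, d ≠ a → ∃ c : Fin 3,
            (if c = a then (1:ℤ) else if a = c then 1 else 0) + 1 ≤
              (if c = a then 1 else if d = c then 1 else 0)) := by decide
      refine ⟨fun c d => if c = C.label j then 1 else (if d = c then 1 else 0),
        ?_, ?_, ?_, ?_⟩
      · intro c t
        dsimp only
        rw [cone_step hx0, hpx]
        by_cases hc : c = C.label j
        · subst hc
          rw [Function.update_self, v_apply]
          simp
        · rw [Function.update_of_ne hc]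
          simp only [if_neg hc]
          rcases fin3cases c with rfl | rfl | rfl <;> simp
      · exact fun c d => (H (C.label j)).1 c d
      · exact (H (C.label j)).2.1
      · exact (H (C.label j)).2.2
    · have h0 : 0 < (j : ℕ) := anc_pos hxj (fun h => hjx h.symm)
      obtain ⟨lam, hcomp, hord, hwit, hsep⟩ :=
        IH _ (C.parent_lt j h0) (anc_parent hxj (fun h => hjx h.symm))
      refine ⟨Function.update lam (C.label j) (fun d => lam 0 d + lam 1 d + lam 2 d),
        ?_, ?_, ?_, ?_⟩
      · intro c t
        by_cases hc : c = C.label j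
        · subst hc
          rw [Function.update_self, cone_step h0, Function.update_self, v_apply]
          rw [hcomp 0 t, hcomp 1 t, hcomp 2 t]
          ring
        · rw [Function.update_of_ne hc, cone_step h0, Function.update_of_ne hc]
          exact hcomp c t
      · intro c d
        by_cases hc : c = C.label j
        · subst hc
          rw [Function.update_self]
          have g0 := hord 0 d
          have g1 := hord 1 d
          have g2 := hord 2 d
          exact ⟨by linarith [g0.1, g1.1, g2.1], by linarith [g0.2, g1.2, g2.2]⟩
        · rw [Function.update_of_ne hc]
          exact hord c d
      · refine ⟨C.label j, ?_⟩
        rw [Function.update_self]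
        obtain ⟨c, hc⟩ := hwit
        have g0 := (hord 0 0).1
        have g1 := (hord 1 0).1
        have g2 := (hord 2 0).1
        rcases fin3cases c with rfl | rfl | rfl <;> linarith
      · intro d hd
        refine ⟨C.label j, ?_⟩
        rw [Function.update_self]
        obtain ⟨c, hc⟩ := hsep d hd
        have g0 := (hord 0 d).2
        have g1 := (hord 1 d).2
        have g2 := (hord 2 d).2
        rcases fin3cases c with rfl | rfl | rfl <;> linarith

lemma v_coords {p x : Fin r} (hx0 : 0 < (x : ℕ)) (hpx : C.parent x = p)
    {j : Fin r} (hxj : C.anc x j = true) :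
    ∃ nu : Fin 3 → ℤ,
      (∀ t, C.v j t = nu 0 * C.cone p 0 t + nu 1 * C.cone p 1 t + nu 2 * C.cone p 2 t) ∧
      1 ≤ nu (C.label x) ∧ (∀ d, d ≠ C.label x → nu (C.label x) + 1 ≤ nu d) := by
  obtain ⟨lam, hcomp, hord, hwit, hsep⟩ := subtree_coords hx0 hpx hxj
  refine ⟨fun d => lam 0 d + lam 1 d + lam 2 d, ?_, ?_, ?_⟩
  · intro t
    rw [v_apply, hcomp 0 t, hcomp 1 t, hcomp 2 t]
    ring
  · dsimp only
    obtain ⟨c, hc⟩ := hwit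
    have g0 := (hord 0 0).1
    have g1 := (hord 1 0).1
    have g2 := (hord 2 0).1
    rcases fin3cases c with rfl | rfl | rfl <;> linarith
  · intro d hd
    dsimp only
    obtain ⟨c, hc⟩ := hsep d hd
    have g0 := (hord 0 d).2
    have g1 := (hord 1 d).2
    have g2 := (hord 2 d).2
    rcases fin3cases c with rfl | rfl | rfl <;> linarith

lemma anc_of_zero {j i : Fin r} (hj : (j : ℕ) = 0) : C.anc j i = true := by
  induction i using strongRecFin with
  | _ i IH =>
    by_cases h0 : 0 < (i : ℕ)
    · exact (C.anc_iff j i).2 (Or.inr ⟨h0, IH _ (C.parent_lt i h0)⟩)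
    · exact (C.anc_iff j i).2 (Or.inl (Fin.ext (by omega)))

lemma child_exists {q i : Fin r} (h : C.anc q i = true) (hne : q ≠ i) :
    ∃ x : Fin r, 0 < (x : ℕ) ∧ C.parent x = q ∧ C.anc x i = true := by
  induction i using strongRecFin with
  | _ i IH =>
    have h0 : 0 < (i : ℕ) := anc_pos h hne
    by_cases hp : C.parent i = q
    · exact ⟨i, h0, hp, anc_refl _⟩
    · obtain ⟨x, hx0, hx1, hx2⟩ :=
        IH _ (C.parent_lt i h0) (anc_parent h hne) (fun h' => hp h'.symm)
      exact ⟨x, hx0, hx1, anc_trans hx2 (anc_step h0)⟩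

/-- Divergence trichotomy. -/
lemma div_cases (i j : Fin r) : C.anc i j = true ∨ C.anc j i = true ∨
    ∃ p x y : Fin r, 0 < (x : ℕ) ∧ 0 < (y : ℕ) ∧ C.parent x = p ∧ C.parent y = p ∧
      C.label x ≠ C.label y ∧ C.anc x i = true ∧ C.anc y j = true := by
  induction j using strongRecFin with
  | _ j IH =>
    by_cases hij : C.anc i j = true
    · exact Or.inl hij
    by_cases hji : C.anc j i = true
    · exact Or.inr (Or.inl hji)
    have h0 : 0 < (j : ℕ) := by
      by_contra h0
      exact hji (anc_of_zero (by omega))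
    rcases IH _ (C.parent_lt j h0) with h' | h' | h'
    · exact absurd (anc_trans h' (anc_step h0)) hij
    · -- parent j is an ancestor of i
      by_cases hq : C.parent j = i
      · exact absurd (hq ▸ anc_step h0) hij
      · obtain ⟨x, hx0, hx1, hx2⟩ := child_exists h' hq
        by_cases hl : C.label x = C.label j
        · have : x = j := by
            by_contra hxy
            exact (C.label_distinct x j hx0 h0 hxy (hx1.trans rfl)) hl
          exact absurd (this ▸ hx2) hji
        · exact Or.inr (Or.inr ⟨C.parent j, x, j, hx0, h0, hx1, rfl, hl, hx2, anc_refl _⟩)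
    · obtain ⟨p, x, y, h1, h2, h3, h4, h5, h6, h7⟩ := h'
      exact Or.inr (Or.inr ⟨p, x, y, h1, h2, h3, h4, h5, h6,
        anc_trans h7 (anc_step h0)⟩)

/-- Global injectivity of `v`. -/
lemma v_inj {i j : Fin r} (h : C.v i = C.v j) : i = j := by
  rcases div_cases (C := C) i j with h' | h' | h'
  · by_contra hne
    exact absurd (congrArg tot h) (ne_of_lt (v_tot_anc_lt h' hne))
  · by_contra hne
    exact absurd (congrArg tot h.symm) (ne_of_lt (v_tot_anc_lt h' (Ne.symm hne)))
  · exfalso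
    obtain ⟨p, x, y, hx0, hy0, hpx, hpy, hl, hxi, hyj⟩ := h'
    obtain ⟨nu, hnu, hnu1, hnu2⟩ := v_coords hx0 hpx hxi
    obtain ⟨ta, hta, hta1, hta2⟩ := v_coords hy0 hpy hyj
    have heq : ∀ d, nu d = ta d := by
      refine coords_unique (det3_cone (C := C) p) ?_
      intro t
      rw [← hnu t, ← hta t, h]
    have e1 := hnu2 _ (Ne.symm hl)
    have e2 := hta2 _ hl
    rw [heq (C.label y), heq (C.label x)] at e1
    linarith

lemma cone_orig_some {k x : Fin r} {c : Fin 3} (h : C.orig k c = some x) :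
    C.cone k c = C.v (C.parent x) := by
  induction k using strongRecFin with
  | _ k IH =>
    by_cases h0 : 0 < (k : ℕ)
    · by_cases hc : C.label k = c
      · rw [orig_pos_label h0 hc] at h
        have : k = x := Option.some_inj.mp h
        subst this
        rw [cone_step h0, ← hc, Function.update_self]
      · rw [orig_pos_ne h0 hc] at h
        rw [cone_step h0, Function.update_of_ne (Ne.symm hc)]
        exact IH _ (C.parent_lt k h0) h
    · rw [orig_zero h0] at h; cases h

lemma cone_orig_none {k : Fin r} {c : Fin 3} (h : C.orig k c = none) :
    C.cone k c = Pi.single c 1 := by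
  induction k using strongRecFin with
  | _ k IH =>
    by_cases h0 : 0 < (k : ℕ)
    · by_cases hc : C.label k = c
      · rw [orig_pos_label h0 hc] at h; cases h
      · rw [orig_pos_ne h0 hc] at h
        rw [cone_step h0, Function.update_of_ne (Ne.symm hc)]
        exact IH _ (C.parent_lt k h0) h
    · rw [cone_zero h0]

/-- The combinatorial characterization of proximity. -/
lemma prox_iff {k i : Fin r} : C.Prox k i ↔
    ∃ x : Fin r, 0 < (x : ℕ) ∧ C.parent x = i ∧ C.orig k (C.label x) = some x := by
  constructor
  · rintro ⟨hne, c, hc⟩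
    cases hx : C.orig k c with
    | none =>
      exfalso
      rw [cone_orig_none hx] at hc
      have h1 := v_tot_ge (C := C) i
      rw [← hc] at h1
      have : tot (Pi.single c (1:ℤ)) = 1 := by
        rcases fin3cases c with rfl | rfl | rfl <;> simp [tot, Pi.single_apply]
      omega
    | some x =>
      obtain ⟨hl, hx0, hanc⟩ := orig_spec hx
      rw [cone_orig_some hx] at hc
      have : C.parent x = i := v_inj hc
      exact ⟨x, hx0, this, hl ▸ hx⟩
  · rintro ⟨x, hx0, hpx, hx⟩
    obtain ⟨hl, _, hanc⟩ := orig_spec hx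
    have hki : k ≠ i := by
      have h1 := anc_le hanc
      have h2 := C.parent_lt x hx0
      rw [hpx] at h2
      exact fun h' => by omega
    exact ⟨hki, C.label x, by rw [cone_orig_some hx, hpx]⟩

end ToricConstellation
namespace ToricConstellation

variable {r : ℕ} {C : ToricConstellation r}

lemma prox_anc {k i : Fin r} (h : C.Prox k i) :
    C.anc i k = true ∧ (i : ℕ) < (k : ℕ) := by
  obtain ⟨x, hx0, hpx, hx⟩ := prox_iff.1 h
  obtain ⟨_, _, hanc⟩ := orig_spec hx
  have h1 : C.anc i x = true := hpx ▸ anc_step hx0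
  have h2 := C.parent_lt x hx0
  have h3 := anc_le hanc
  exact ⟨anc_trans h1 hanc, by omega⟩

lemma prefix_prox {k i j : Fin r} (h : C.Prox k i) (hjk : C.anc j k = true)
    (hij : C.anc i j = true) (hne : j ≠ i) : C.Prox j i := by
  obtain ⟨x, hx0, hpx, hx⟩ := prox_iff.1 h
  obtain ⟨hl, _, hanc⟩ := orig_spec hx
  -- x and j are comparable (both ancestors of k)
  have hxj : C.anc x j = true := by
    rcases anc_comp hanc hjk with h' | h'
    · exact h'
    · rcases anc_child hx0 hpx hij h' with h'' | h''
      · exact absurd h'' hne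
      · exact h'' ▸ anc_refl _
  exact prox_iff.2 ⟨x, hx0, hpx, orig_mono hjk hxj hx⟩

lemma inChain_prox {i k : Fin r} {a b : Fin 3} (hab : a ≠ b)
    (h : C.inChain i a b k = true) : C.Prox k i := by
  obtain ⟨x, hx0, hpx, hlx, hor⟩ := inChain_orig hab h
  exact prox_iff.2 ⟨x, hx0, hpx, hlx ▸ hor⟩

lemma linProx_prox {i k : Fin r} (h : C.LinProx k i) : C.Prox k i := by
  obtain ⟨a, b, hab, hch⟩ := h
  exact inChain_prox hab hch

lemma chains_disjoint {i k : Fin r} {a b : Fin 3} (hab : a ≠ b) :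
    ¬ (C.inChain i a b k = true ∧ C.inChain i b a k = true) := by
  rintro ⟨h1, h2⟩
  rcases ((inChain_iff i k a b).1 h1) with ⟨h0, g1 | g1⟩ <;>
    rcases ((inChain_iff i k b a).1 h2) with ⟨_, g2 | g2⟩
  · exact hab (g1.2 ▸ g2.2 ▸ rfl)
  · exact inChain_low (i := i) (by rw [g1.1]) g2.2
  · exact inChain_low (i := i) (by rw [g2.1]) g1.2
  · exact hab (g2.1 ▸ g1.1 ▸ rfl)

/-- If `k → i` and all labels strictly below `i` lie in `{a,b}`, `k` is in one of
the two chains. -/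
lemma chain_of_labels {i k : Fin r} {a b : Fin 3} (hab : a ≠ b) (h : C.Prox k i)
    (hsub : ∀ c ∈ C.labelsDN i k, c = a ∨ c = b) :
    C.inChain i a b k = true ∨ C.inChain i b a k = true := by
  obtain ⟨x, hx0, hpx, hx⟩ := prox_iff.1 h
  obtain ⟨hl, _, hanc⟩ := orig_spec hx
  have hik : C.anc i k = true := (prox_anc h).1
  have hilt : (i : ℕ) < (x : ℕ) := hpx ▸ C.parent_lt x hx0
  have hxL : C.label x ∈ C.labelsDN i k := by
    rw [mem_labelsDN_iff hik]
    exact ⟨x, hpx ▸ anc_step hx0, hanc, fun h' => by rw [h'] at hilt; omega, rfl⟩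
  have hrest : ∀ z, C.anc x z = true → C.anc z k = true → z ≠ x →
      C.label z = a ∨ C.label z = b := by
    intro z hz1 hz2 hz3
    refine hsub _ ((mem_labelsDN_iff hik).2 ⟨z, ?_, hz2, ?_, rfl⟩)
    · exact anc_trans (hpx ▸ anc_step hx0) hz1
    · have := anc_le hz1
      exact fun h' => by rw [h'] at this; omega
  rcases hsub _ hxL with hxa | hxa
  · left
    refine inChain_build hx0 hpx hxa hanc ?_
    intro z hz1 hz2 hz3
    rcases hrest z hz1 hz2 hz3 with h' | h'
    · exact absurd (h'.trans hxa.symm) (orig_no_later hx hz1 hz2 hz3)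
    · exact h'
  · right
    refine inChain_build hx0 hpx hxa hanc ?_
    intro z hz1 hz2 hz3
    rcases hrest z hz1 hz2 hz3 with h' | h'
    · exact h'
    · exact absurd (h'.trans hxa.symm) (orig_no_later hx hz1 hz2 hz3)

lemma otherPair : ∀ c : Fin 3, ∃ a b : Fin 3, a ≠ b ∧ a ≠ c ∧ b ≠ c ∧
    ∀ z : Fin 3, z ≠ c → (z = a ∨ z = b) := by decide

/-- For `k → i`: the pair chains avoiding `c` contain `k` iff `c` does not appear
strictly below `i` on the path to `k`. -/
lemma pairchain_iff {i k : Fin r} {a b c : Fin 3} (hab : a ≠ b) (hac : a ≠ c)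
    (hbc : b ≠ c) (h : C.Prox k i) :
    (C.inChain i a b k = true ∨ C.inChain i b a k = true) ↔ c ∉ C.labelsDN i k := by
  constructor
  · intro h' hc
    rcases h' with h' | h'
    · rcases inChain_labels h' c hc with h'' | h''
      · exact hac h''.symm
      · exact hbc h''.symm
    · rcases inChain_labels h' c hc with h'' | h''
      · exact hbc h''.symm
      · exact hac h''.symm
  · intro hc
    refine chain_of_labels hab h ?_
    intro z hz
    have hzc : z ≠ c := fun h' => hc (h' ▸ hz)
    rcases fin3cases z with rfl | rfl | rfl <;> rcases fin3cases a with rfl | rfl | rfl <;>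
      rcases fin3cases b with rfl | rfl | rfl <;> rcases fin3cases c with rfl | rfl | rfl <;>
        simp_all

/-- `k ↠ i` iff `k → i` and some label is missing below `i`. -/
lemma linProx_iff {i k : Fin r} (h : C.Prox k i) :
    C.LinProx k i ↔ ∃ c, c ∉ C.labelsDN i k := by
  constructor
  · rintro ⟨a, b, hab, hch⟩
    obtain ⟨c, hca, hcb⟩ : ∃ c : Fin 3, c ≠ a ∧ c ≠ b := by
      rcases fin3cases a with rfl | rfl | rfl <;> rcases fin3cases b with rfl | rfl | rfl <;>
        decide
    refine ⟨c, fun hc => ?_⟩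
    rcases inChain_labels hch c hc with h' | h'
    · exact hca h'
    · exact hcb h'
  · rintro ⟨c, hc⟩
    obtain ⟨a, b, hab, hac, hbc, -⟩ := otherPair c
    rcases (pairchain_iff hab hac hbc h).2 hc with h' | h'
    · exact ⟨a, b, hab, h'⟩
    · exact ⟨b, a, hab.symm, h'⟩

end ToricConstellation
namespace ToricConstellation

variable {r : ℕ} {C : ToricConstellation r}

lemma parent_mem_J {i k : Fin r} (h : C.Prox k i) (hpk : C.parent k ≠ i) :
    C.Prox (C.parent k) i ∧ C.LinProx k (C.parent k) := by
  have hik : C.anc i k = true := (prox_anc h).1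
  have hilt : (i : ℕ) < (k : ℕ) := (prox_anc h).2
  have hk0 : 0 < (k : ℕ) := by omega
  have hki : k ≠ i := fun h' => by rw [h'] at hilt; omega
  constructor
  · exact prefix_prox h (anc_step hk0) (anc_parent hik (Ne.symm hki)) hpk
  · obtain ⟨a, b, hab, had, hbd, -⟩ := otherPair (C.label k)
    exact ⟨C.label k, a, Ne.symm had,
      (inChain_iff _ k _ _).2 ⟨hk0, Or.inl ⟨rfl, rfl⟩⟩⟩

/-- Any element of `J` other than `parent k` equals `parent (stem k)`. -/
lemma J_elt_eq {i k j : Fin r} (h : C.Prox k i) (hj2 : C.LinProx k j)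
    (hjp : j ≠ C.parent k) : j = C.parent (C.stem k) := by
  have hilt : (i : ℕ) < (k : ℕ) := (prox_anc h).2
  have hk0 : 0 < (k : ℕ) := by omega
  obtain ⟨a', b', hab', hch⟩ := hj2
  rcases ((inChain_iff j k a' b').1 hch).2 with hcase | hcase
  · exact absurd hcase.1.symm hjp
  · rcases chain_climb hch with hc | hc
    · exact absurd hc.1.symm hjp
    · obtain ⟨w, hw0, hw1, hw2, hw3, hw4, hw5⟩ := hc
      have hst : C.stem k = w := by
        refine stem_unique hk0 hw3 hw4 ?_ ?_
        · rw [hw2, hcase.1]; exact hab'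
        · intro z hz1 hz2 hz3
          rw [hcase.1]
          exact hw5 z hz1 hz2 hz3
      rw [hst, hw1]

/-- The central count: the number of labels strictly below `i` on the path to `k`
exceeds by one the number of `j → i` with `k ↠ j`. -/
lemma Jcard {i k : Fin r} (h : C.Prox k i) :
    (C.labelsDN i k).card
      = (Finset.univ.filter (fun j => C.Prox j i ∧ C.LinProx k j)).card + 1 := by
  obtain ⟨x, hx0, hpx, hx⟩ := prox_iff.1 h
  obtain ⟨-, -, hxk⟩ := orig_spec hx
  have hik : C.anc i k = true := (prox_anc h).1
  have hilt : (i : ℕ) < (k : ℕ) := (prox_anc h).2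
  have hk0 : 0 < (k : ℕ) := by omega
  have hki : k ≠ i := fun h' => by rw [h'] at hilt; omega
  have hix : C.anc i x = true := hpx ▸ anc_step hx0
  have hixlt : (i : ℕ) < (x : ℕ) := hpx ▸ C.parent_lt x hx0
  have hxi : x ≠ i := fun h' => by rw [h'] at hixlt; omega
  by_cases hpk : C.parent k = i
  · -- k is the child of i : J = ∅, L = {label k}
    have hJ : Finset.univ.filter (fun j => C.Prox j i ∧ C.LinProx k j) = ∅ := by
      rw [Finset.filter_eq_empty_iff]
      rintro j - ⟨hj1, hj2⟩
      have hjk := prox_anc (linProx_prox hj2)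
      have hij := prox_anc hj1
      have hjki : j ≠ k := fun h' => by
        have := hjk.2; rw [h'] at this; omega
      have : C.anc j i = true := hpk ▸ anc_parent hjk.1 hjki
      have := anc_le this
      have := hij.2
      omega
    have hL : C.labelsDN i k = {C.label k} := by
      rw [labelsDN_step hk0 hki, hpk, labelsDN_self]
      rfl
    rw [hJ, hL]
    simp
  · -- k is deeper
    have hkx : k ≠ x := fun h' => hpk (h' ▸ hpx)
    have hlkx : C.label k ≠ C.label x := orig_no_later hx hxk (anc_refl k) hkx
    obtain ⟨hylt, hyk⟩ := stem_lt (C := C) hk0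
    have hxy : C.anc x (C.stem k) = true := by
      rcases anc_comp hxk hyk with h' | h'
      · exact h'
      · by_cases hyx : C.stem k = x
        · rw [hyx]; exact anc_refl x
        · exact absurd (stem_labels hk0 x h' hxk (fun h'' => hyx h''.symm)).symm hlkx
    have hy0 : 0 < ((C.stem k) : ℕ) := by
      have := anc_le hxy; omega
    have hly : C.label (C.stem k) ≠ C.label k := stem_label_ne hk0 hy0
    have hpkJ := parent_mem_J h hpk
    have hkyne : C.stem k ≠ k := fun h' => by rw [h'] at hylt; omega
    by_cases hyx : C.stem k = x
    · -- chain case : J = {parent k}, L = {label x, label k}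
      have hJ : Finset.univ.filter (fun j => C.Prox j i ∧ C.LinProx k j)
          = {C.parent k} := by
        ext j
        simp only [Finset.mem_filter, Finset.mem_univ, true_and, Finset.mem_singleton]
        constructor
        · rintro ⟨hj1, hj2⟩
          by_cases hjp : j = C.parent k
          · exact hjp
          · exfalso
            have := J_elt_eq h hj2 hjp
            rw [hyx, hpx] at this
            have := (prox_anc hj1).2
            rw [‹j = i›] at this
            omega
        · rintro rfl
          exact hpkJ
      have hL : C.labelsDN i k = {C.label x, C.label k} := by
        ext c
        rw [mem_labelsDN_iff hik]
        simp only [Finset.mem_insert, Finset.mem_singleton]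
        constructor
        · rintro ⟨z, hz1, hz2, hz3, rfl⟩
          rcases anc_comp hxk hz2 with h' | h'
          · by_cases hzx : z = x
            · exact Or.inl (hzx ▸ rfl)
            · right
              have := stem_labels hk0 z (by rw [hyx]; exact h') hz2
                (by rw [hyx]; exact hzx)
              exact this
          · rcases anc_child hx0 hpx hz1 h' with h'' | h''
            · exact absurd h'' hz3
            · exact Or.inl (h'' ▸ rfl)
        · rintro (rfl | rfl)
          · exact ⟨x, hix, hxk, hxi, rfl⟩
          · exact ⟨k, hik, anc_refl k, hki, rfl⟩
      rw [hJ, hL, Finset.card_singleton,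
        Finset.card_insert_of_notMem (by simp [Ne.symm hlkx]), Finset.card_singleton]
    · -- generic case : J = {parent k, parent (stem k)}, #L = 3
      have hpy_ne_i : C.parent (C.stem k) ≠ i :=
        fun h' => hyx (child_unique hy0 h' hx0 hpx hyk hxk)
      have hlyx : C.label (C.stem k) ≠ C.label x := orig_no_later hx hxy hyk hyx
      have hxyne : x ≠ C.stem k := fun h' => hyx h'.symm
      have hiy : C.anc i (C.stem k) = true := anc_trans hix hxy
      have hpyk : ((C.parent (C.stem k)) : ℕ) < ((C.parent k) : ℕ) := by
        have h1 : C.anc (C.stem k) (C.parent k) = true := anc_parent hyk hkyne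
        have h2 := anc_le h1
        have h3 := C.parent_lt (C.stem k) hy0
        omega
      have hJ : Finset.univ.filter (fun j => C.Prox j i ∧ C.LinProx k j)
          = {C.parent k, C.parent (C.stem k)} := by
        ext j
        simp only [Finset.mem_filter, Finset.mem_univ, true_and, Finset.mem_insert,
          Finset.mem_singleton]
        constructor
        · rintro ⟨hj1, hj2⟩
          by_cases hjp : j = C.parent k
          · exact Or.inl hjp
          · exact Or.inr (J_elt_eq h hj2 hjp)
        · rintro (rfl | rfl)
          · exact hpkJ
          · constructor
            · exact prefix_prox h (anc_trans (anc_step hy0) hyk)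
                (anc_trans hix (anc_parent hxy hxyne)) hpy_ne_i
            · exact ⟨C.label (C.stem k), C.label k, hly,
                inChain_build hy0 rfl rfl hyk (stem_labels hk0)⟩
      have hLsub : ({C.label x, C.label (C.stem k), C.label k} : Finset (Fin 3))
          ⊆ C.labelsDN i k := by
        intro c hc
        rw [mem_labelsDN_iff hik]
        simp only [Finset.mem_insert, Finset.mem_singleton] at hc
        rcases hc with rfl | rfl | rfl
        · exact ⟨x, hix, hxk, hxi, rfl⟩
        · refine ⟨C.stem k, hiy, hyk, ?_, rfl⟩
          intro h'
          have := anc_le hxy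
          rw [h'] at this
          omega
        · exact ⟨k, hik, anc_refl k, hki, rfl⟩
      have hc3 : ({C.label x, C.label (C.stem k), C.label k} : Finset (Fin 3)).card = 3 := by
        rw [Finset.card_insert_of_notMem (by simp [Ne.symm hlyx, Ne.symm hlkx]),
          Finset.card_insert_of_notMem (by simp [hly]), Finset.card_singleton]
      have h3le : 3 ≤ (C.labelsDN i k).card := by
        have := Finset.card_le_card hLsub
        omega
      have hle3 : (C.labelsDN i k).card ≤ 3 := by
        have := Finset.card_le_card (Finset.subset_univ (C.labelsDN i k))
        simpa using this
      have hJc : (Finset.univ.filter (fun j => C.Prox j i ∧ C.LinProx k j)).card = 2 := by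
        rw [hJ, Finset.card_insert_of_notMem (by
          simp only [Finset.mem_singleton]
          exact fun h' => by rw [h'] at hpyk; omega), Finset.card_singleton]
      omega

end ToricConstellation
namespace ToricConstellation

variable {r : ℕ} {C : ToricConstellation r}

/-- The canonical node associated to a label under `i`. -/
private def phi (C : ToricConstellation r) (i : Fin r) (c : Fin 3) : Fin r :=
  C.parent ((C.orig i c).getD i)

private lemma phi_spec {i x : Fin r} {c : Fin 3} (hx : C.orig i c = some x) :
    C.phi i c = C.parent x := by
  rw [phi, hx]; rfl

private lemma orig_inj {i x1 x2 : Fin r} {c1 c2 : Fin 3}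
    (h1 : C.orig i c1 = some x1) (h2 : C.orig i c2 = some x2)
    (hp : C.parent x1 = C.parent x2) : x1 = x2 := by
  obtain ⟨hl1, h01, ha1⟩ := orig_spec h1
  obtain ⟨hl2, h02, ha2⟩ := orig_spec h2
  by_contra hne
  rcases anc_comp ha1 ha2 with h' | h'
  · have := anc_le (anc_parent h' hne)
    rw [← hp] at this
    have := C.parent_lt x1 h01
    omega
  · have := anc_le (anc_parent h' (Ne.symm hne))
    rw [hp] at this
    have := C.parent_lt x2 h02
    omega

lemma card_Bset (i : Fin r) :
    (Finset.univ.filter (fun j => C.Prox i j)).card = (C.labelsUnder i).card := by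
  symm
  refine Finset.card_bij (fun c _ => C.phi i c) ?_ ?_ ?_
  · intro c hc
    obtain ⟨x, hx⟩ := mem_labelsUnder_iff.1 hc
    obtain ⟨hl, h0, ha⟩ := orig_spec hx
    rw [Finset.mem_filter]
    exact ⟨Finset.mem_univ _, prox_iff.2 ⟨x, h0, (phi_spec hx).symm, by rw [hl]; exact hx⟩⟩
  · intro c1 hc1 c2 hc2 hphi
    try dsimp only at hphi
    obtain ⟨x1, hx1⟩ := mem_labelsUnder_iff.1 hc1
    obtain ⟨x2, hx2⟩ := mem_labelsUnder_iff.1 hc2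
    rw [phi_spec hx1, phi_spec hx2] at hphi
    have := orig_inj hx1 hx2 hphi
    rw [← (orig_spec hx1).1, ← (orig_spec hx2).1, this]
  · intro j hj
    rw [Finset.mem_filter] at hj
    obtain ⟨x, h0, hpx, hox⟩ := prox_iff.1 hj.2
    exact ⟨C.label x, mem_labelsUnder_iff.2 ⟨x, hox⟩, by
      show C.phi i (C.label x) = j
      rw [phi_spec hox, hpx]⟩

lemma card_Bset_prox {i k : Fin r} (h : C.Prox k i) :
    (Finset.univ.filter (fun j => C.Prox i j ∧ C.Prox k j)).card
      = ((C.labelsUnder i) \ (C.labelsDN i k)).card := by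
  have hik : C.anc i k = true := (prox_anc h).1
  symm
  refine Finset.card_bij (fun c _ => C.phi i c) ?_ ?_ ?_
  · intro c hc
    rw [Finset.mem_sdiff] at hc
    obtain ⟨x, hx⟩ := mem_labelsUnder_iff.1 hc.1
    obtain ⟨hl, h0, ha⟩ := orig_spec hx
    have hno : ∀ z, C.anc i z = true → C.anc z k = true → z ≠ i → C.label z ≠ c :=
      fun z h1 h2 h3 hlz => hc.2 ((mem_labelsDN_iff hik).2 ⟨z, h1, h2, h3, hlz⟩)
    have hok : C.orig k c = some x := orig_extend hik hx hno
    rw [Finset.mem_filter]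
    refine ⟨Finset.mem_univ _, ?_, ?_⟩
    · exact prox_iff.2 ⟨x, h0, (phi_spec hx).symm, by rw [hl]; exact hx⟩
    · exact prox_iff.2 ⟨x, h0, (phi_spec hx).symm, by rw [hl]; exact hok⟩
  · intro c1 hc1 c2 hc2 hphi
    try dsimp only at hphi
    rw [Finset.mem_sdiff] at hc1 hc2
    obtain ⟨x1, hx1⟩ := mem_labelsUnder_iff.1 hc1.1
    obtain ⟨x2, hx2⟩ := mem_labelsUnder_iff.1 hc2.1
    rw [phi_spec hx1, phi_spec hx2] at hphi
    have := orig_inj hx1 hx2 hphi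
    rw [← (orig_spec hx1).1, ← (orig_spec hx2).1, this]
  · intro j hj
    rw [Finset.mem_filter] at hj
    obtain ⟨-, hij, hkj⟩ := hj
    obtain ⟨x, h0, hpx, hox⟩ := prox_iff.1 hij
    obtain ⟨x', h0', hpx', hox'⟩ := prox_iff.1 hkj
    obtain ⟨hl, -, ha⟩ := orig_spec hox
    obtain ⟨hl', -, ha'⟩ := orig_spec hox'
    have hxx : x = x' :=
      child_unique h0 hpx h0' hpx' (anc_trans ha hik) ha'
    refine ⟨C.label x, ?_, by
      show C.phi i (C.label x) = j
      rw [phi_spec hox, hpx]⟩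
    rw [Finset.mem_sdiff]
    refine ⟨mem_labelsUnder_iff.2 ⟨x, hox⟩, ?_⟩
    intro hmem
    obtain ⟨z, hz1, hz2, hz3, hz4⟩ := (mem_labelsDN_iff hik).1 hmem
    have hxz : C.anc x z = true := anc_trans ha hz1
    have hzx : z ≠ x := by
      have h1 := anc_le ha
      have h2 := anc_lt hz1 hz3.symm
      exact fun h' => by rw [h'] at h2; omega
    have : C.orig k (C.label x) = some x := by rw [hxx] at hl ⊢; rw [hl]; rw [← hl']; exact hox'
    exact orig_no_later this hxz hz2 hzx hz4
end ToricConstellation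
namespace ToricCluster

open ToricConstellation

variable {r : ℕ}

lemma coeff_key : ∀ S L : Finset (Fin 3), 0 < L.card →
    ((if (2:Fin 3) ∉ S ∧ (2:Fin 3) ∉ L then (1:ℤ) else 0)
      + (if (1:Fin 3) ∉ S ∧ (1:Fin 3) ∉ L then 1 else 0)
      + (if (0:Fin 3) ∉ S ∧ (0:Fin 3) ∉ L then 1 else 0)
      + ((L.card : ℤ) - 1)
      + (if L ≠ Finset.univ then ((S \ L).card : ℤ) else 0)) = 2 := by decide

lemma S_key : ∀ S : Finset (Fin 3),
    ((if (2:Fin 3) ∉ S then (1:ℤ) else 0) + (if (1:Fin 3) ∉ S then 1 else 0)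
      + (if (0:Fin 3) ∉ S then 1 else 0)) = 3 - (S.card : ℤ) := by decide

/-- The pointwise counting identity. -/
lemma pointwise (A : ToricCluster r) (i k : Fin r) :
    (if (2:Fin 3) ∉ A.toToricConstellation.labelsUnder i then
        ((if A.toToricConstellation.inChain i 0 1 k = true then A.m k else 0)
          + (if A.toToricConstellation.inChain i 1 0 k = true then A.m k else 0)) else 0)
    + (if (1:Fin 3) ∉ A.toToricConstellation.labelsUnder i then
        ((if A.toToricConstellation.inChain i 0 2 k = true then A.m k else 0)
          + (if A.toToricConstellation.inChain i 2 0 k = true then A.m k else 0)) else 0)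
    + (if (0:Fin 3) ∉ A.toToricConstellation.labelsUnder i then
        ((if A.toToricConstellation.inChain i 1 2 k = true then A.m k else 0)
          + (if A.toToricConstellation.inChain i 2 1 k = true then A.m k else 0)) else 0)
    + (if A.toToricConstellation.Prox k i then
        ((Finset.univ.filter (fun j => A.toToricConstellation.Prox j i ∧
          A.toToricConstellation.LinProx k j)).card : ℤ) * A.m k else 0)
    + (if A.toToricConstellation.LinProx k i then
        ((Finset.univ.filter (fun j => A.toToricConstellation.Prox i j ∧
          A.toToricConstellation.Prox k j)).card : ℤ) * A.m k else 0)
    = if A.toToricConstellation.Prox k i then 2 * A.m k else 0 := by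
  set C := A.toToricConstellation with hC
  by_cases hP : C.Prox k i
  · -- the main case
    have hJ := Jcard hP
    have hB' := card_Bset_prox hP
    have hLP := linProx_iff hP
    have hpair : ∀ a b c : Fin 3, a ≠ b → a ≠ c → b ≠ c →
        ((if C.inChain i a b k = true then A.m k else 0)
          + (if C.inChain i b a k = true then A.m k else 0))
        = (if c ∉ C.labelsDN i k then A.m k else 0) := by
      intro a b c hab hac hbc
      by_cases hc : c ∉ C.labelsDN i k
      · rcases (pairchain_iff hab hac hbc hP).2 hc with h' | h'
        · rw [if_pos h', if_neg (fun h'' => chains_disjoint hab ⟨h', h''⟩), if_pos hc,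
            add_zero]
        · rw [if_neg (fun h'' => chains_disjoint hab ⟨h'', h'⟩), if_pos h', if_pos hc,
            zero_add]
      · have h1 : ¬ C.inChain i a b k = true := fun h' =>
          hc ((pairchain_iff hab hac hbc hP).1 (Or.inl h'))
        have h2 : ¬ C.inChain i b a k = true := fun h' =>
          hc ((pairchain_iff hab hac hbc hP).1 (Or.inr h'))
        rw [if_neg h1, if_neg h2, if_neg hc, add_zero]
    rw [hpair 0 1 2 (by decide) (by decide) (by decide),
      hpair 0 2 1 (by decide) (by decide) (by decide),
      hpair 1 2 0 (by decide) (by decide) (by decide)]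
    have hcond : C.LinProx k i ↔ C.labelsDN i k ≠ Finset.univ := by
      rw [hLP]
      constructor
      · rintro ⟨c, hc⟩ h'
        exact hc (h' ▸ Finset.mem_univ c)
      · intro h'
        by_contra hno
        push_neg at hno
        exact h' (Finset.eq_univ_iff_forall.2 hno)
    rw [if_congr hcond rfl rfl, if_pos hP, if_pos hP, hB']
    -- now a pure statement about the two label sets
    set S := C.labelsUnder i
    set L := C.labelsDN i k
    have hL0 : 0 < L.card := by omega
    have hJc : ((Finset.univ.filter (fun j => C.Prox j i ∧ C.LinProx k j)).card : ℤ)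
        = (L.card : ℤ) - 1 := by
      have : L.card = (Finset.univ.filter (fun j => C.Prox j i ∧ C.LinProx k j)).card + 1 := hJ
      push_cast [this]
      ring
    rw [hJc]
    have key := coeff_key S L hL0
    have t1 : (if (2:Fin 3) ∉ S then (if (2:Fin 3) ∉ L then A.m k else 0) else 0)
        = (if (2:Fin 3) ∉ S ∧ (2:Fin 3) ∉ L then (1:ℤ) else 0) * A.m k := by
      rw [← ite_and]; split <;> ring
    have t2 : (if (1:Fin 3) ∉ S then (if (1:Fin 3) ∉ L then A.m k else 0) else 0)
        = (if (1:Fin 3) ∉ S ∧ (1:Fin 3) ∉ L then (1:ℤ) else 0) * A.m k := by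
      rw [← ite_and]; split <;> ring
    have t3 : (if (0:Fin 3) ∉ S then (if (0:Fin 3) ∉ L then A.m k else 0) else 0)
        = (if (0:Fin 3) ∉ S ∧ (0:Fin 3) ∉ L then (1:ℤ) else 0) * A.m k := by
      rw [← ite_and]; split <;> ring
    have t5 : (if L ≠ Finset.univ then ((S \ L).card : ℤ) * A.m k else 0)
        = (if L ≠ Finset.univ then ((S \ L).card : ℤ) else 0) * A.m k := by
      split <;> ring
    rw [t1, t2, t3, t5]
    linear_combination A.m k * key
  · -- k is not proximate to i : everything vanishes
    have hch : ∀ a b : Fin 3, a ≠ b → ¬ C.inChain i a b k = true :=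
      fun a b hab h' => hP (inChain_prox hab h')
    rw [if_neg hP, if_neg hP, if_neg (fun h' => hP (linProx_prox h')),
      if_neg (hch 0 1 (by decide)), if_neg (hch 1 0 (by decide)),
      if_neg (hch 0 2 (by decide)), if_neg (hch 2 0 (by decide)),
      if_neg (hch 1 2 (by decide)), if_neg (hch 2 1 (by decide))]
    simp

end ToricCluster
namespace ToricCluster

open ToricConstellation Finset

variable {r : ℕ}

lemma ite_sum {r : ℕ} {P : Prop} [Decidable P] (f : Fin r → ℤ) :
    (if P then (∑ k, f k) else 0) = ∑ k, (if P then f k else 0) := by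
  split
  · rfl
  · exact Finset.sum_const_zero.symm

/-- The key global identity. -/
lemma key_sum (A : ToricCluster r) (i : Fin r) :
    (if (2:Fin 3) ∉ A.toToricConstellation.labelsUnder i then A.M i 0 1 + A.M i 1 0 else 0)
    + (if (1:Fin 3) ∉ A.toToricConstellation.labelsUnder i then A.M i 0 2 + A.M i 2 0 else 0)
    + (if (0:Fin 3) ∉ A.toToricConstellation.labelsUnder i then A.M i 1 2 + A.M i 2 1 else 0)
    + (∑ j ∈ A.proxSet i, ∑ k ∈ (A.proxSet i).filter
        (fun k => LinProx A.toToricConstellation k j), A.m k)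
    + (∑ j ∈ A.Bset i, ∑ k ∈ (A.proxSet j).filter
        (fun k => LinProx A.toToricConstellation k i), A.m k)
    = 2 * ∑ k ∈ A.proxSet i, A.m k := by
  classical
  have eM : ∀ a b : Fin 3, A.M i a b + A.M i b a
      = ∑ k : Fin r, ((if A.toToricConstellation.inChain i a b k = true then A.m k else 0)
          + (if A.toToricConstellation.inChain i b a k = true then A.m k else 0)) := by
    intro a b
    rw [M, M, Finset.sum_filter, Finset.sum_filter, ← Finset.sum_add_distrib]
  have e2 : (∑ j ∈ A.proxSet i, ∑ k ∈ (A.proxSet i).filter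
        (fun k => LinProx A.toToricConstellation k j), A.m k)
      = ∑ k : Fin r, (if A.toToricConstellation.Prox k i then
          ((Finset.univ.filter (fun j => A.toToricConstellation.Prox j i ∧
            A.toToricConstellation.LinProx k j)).card : ℤ) * A.m k else 0) := by
    calc (∑ j ∈ A.proxSet i, ∑ k ∈ (A.proxSet i).filter
          (fun k => LinProx A.toToricConstellation k j), A.m k)
        = ∑ j ∈ A.proxSet i, ∑ k ∈ A.proxSet i,
            (if A.toToricConstellation.LinProx k j then A.m k else 0) :=
          Finset.sum_congr rfl (fun j _ => Finset.sum_filter _ _)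
      _ = ∑ k ∈ A.proxSet i, ∑ j ∈ A.proxSet i,
            (if A.toToricConstellation.LinProx k j then A.m k else 0) := Finset.sum_comm
      _ = ∑ k ∈ A.proxSet i,
            ((Finset.univ.filter (fun j => A.toToricConstellation.Prox j i ∧
              A.toToricConstellation.LinProx k j)).card : ℤ) * A.m k := by
          refine Finset.sum_congr rfl (fun k _ => ?_)
          rw [← Finset.sum_filter, proxSet, Finset.filter_filter, Finset.sum_const,
            nsmul_eq_mul]
      _ = ∑ k : Fin r, (if A.toToricConstellation.Prox k i then
            ((Finset.univ.filter (fun j => A.toToricConstellation.Prox j i ∧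
              A.toToricConstellation.LinProx k j)).card : ℤ) * A.m k else 0) := by
          rw [proxSet, Finset.sum_filter]
  have e3 : (∑ j ∈ A.Bset i, ∑ k ∈ (A.proxSet j).filter
        (fun k => LinProx A.toToricConstellation k i), A.m k)
      = ∑ k : Fin r, (if A.toToricConstellation.LinProx k i then
          ((Finset.univ.filter (fun j => A.toToricConstellation.Prox i j ∧
            A.toToricConstellation.Prox k j)).card : ℤ) * A.m k else 0) := by
    calc (∑ j ∈ A.Bset i, ∑ k ∈ (A.proxSet j).filter
          (fun k => LinProx A.toToricConstellation k i), A.m k)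
        = ∑ j ∈ A.Bset i, ∑ k : Fin r,
            (if A.toToricConstellation.Prox k j ∧ A.toToricConstellation.LinProx k i
              then A.m k else 0) := by
          refine Finset.sum_congr rfl (fun j _ => ?_)
          rw [proxSet, Finset.filter_filter, Finset.sum_filter]
      _ = ∑ k : Fin r, ∑ j ∈ A.Bset i,
            (if A.toToricConstellation.Prox k j ∧ A.toToricConstellation.LinProx k i
              then A.m k else 0) := Finset.sum_comm
      _ = ∑ k : Fin r, (if A.toToricConstellation.LinProx k i then
            ((Finset.univ.filter (fun j => A.toToricConstellation.Prox i j ∧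
              A.toToricConstellation.Prox k j)).card : ℤ) * A.m k else 0) := by
          refine Finset.sum_congr rfl (fun k _ => ?_)
          by_cases hk : A.toToricConstellation.LinProx k i
          · rw [if_pos hk]
            have hrw : ∀ j, (if A.toToricConstellation.Prox k j ∧
                  A.toToricConstellation.LinProx k i then A.m k else 0)
                = (if A.toToricConstellation.Prox k j then A.m k else 0) := by
              intro j; simp [hk]
            rw [Finset.sum_congr rfl (fun j _ => hrw j), ← Finset.sum_filter, Bset,
              Finset.filter_filter, Finset.sum_const, nsmul_eq_mul]
          · simp [hk]
  have eR : 2 * (∑ k ∈ A.proxSet i, A.m k)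
      = ∑ k : Fin r, (if A.toToricConstellation.Prox k i then 2 * A.m k else 0) := by
    rw [proxSet, Finset.sum_filter, Finset.mul_sum]
    exact Finset.sum_congr rfl (fun k _ => by rw [mul_ite, mul_zero])
  rw [eM 0 1, eM 0 2, eM 1 2, e2, e3, eR, ite_sum, ite_sum, ite_sum,
    ← Finset.sum_add_distrib, ← Finset.sum_add_distrib, ← Finset.sum_add_distrib,
    ← Finset.sum_add_distrib]
  exact Finset.sum_congr rfl (fun k _ => pointwise A i k)

end ToricCluster
open ToricConstellation ToricCluster in
theorem stmt1 {r : ℕ} (A : ToricCluster r) (hA : A.Idealistic) (i : Fin r) :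
    A.chi i = A.D i - A.R i + A.T i := by
  classical
  have hkey := key_sum A i
  have hB : ((A.Bset i).card : ℤ)
      = (((A.toToricConstellation.labelsUnder i)).card : ℤ) := by
    have := card_Bset (C := A.toToricConstellation) i
    rw [Bset]
    exact_mod_cast this
  have h1 : ∑ j ∈ A.proxSet i, A.m j * (A.m j - 1)
      = (∑ j ∈ A.proxSet i, A.m j ^ 2) - ∑ j ∈ A.proxSet i, A.m j := by
    rw [← Finset.sum_sub_distrib]
    exact Finset.sum_congr rfl (fun j _ => by ring)
  have h2 : ∑ j ∈ A.proxSet i,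
        (A.m j - ∑ k ∈ (A.proxSet i).filter
          (fun k => LinProx A.toToricConstellation k j), A.m k)
      = (∑ j ∈ A.proxSet i, A.m j)
        - ∑ j ∈ A.proxSet i, (∑ k ∈ (A.proxSet i).filter
            (fun k => LinProx A.toToricConstellation k j), A.m k) :=
    Finset.sum_sub_distrib _ _
  have h3 : ∑ j ∈ A.Bset i,
        (A.m i - ∑ k ∈ (A.proxSet j).filter
          (fun k => LinProx A.toToricConstellation k i), A.m k)
      = ((A.Bset i).card : ℤ) * A.m i
        - ∑ j ∈ A.Bset i, (∑ k ∈ (A.proxSet j).filter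
            (fun k => LinProx A.toToricConstellation k i), A.m k) := by
    rw [Finset.sum_sub_distrib, Finset.sum_const, nsmul_eq_mul]
  have hR : A.R i
      = ((if (2:Fin 3) ∉ labelsUnder A.toToricConstellation i then A.m i else 0)
          + (if (1:Fin 3) ∉ labelsUnder A.toToricConstellation i then A.m i else 0)
          + (if (0:Fin 3) ∉ labelsUnder A.toToricConstellation i then A.m i else 0))
        - ((if (2:Fin 3) ∉ labelsUnder A.toToricConstellation i then
              A.M i 0 1 + A.M i 1 0 else 0)
            + (if (1:Fin 3) ∉ labelsUnder A.toToricConstellation i then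
                A.M i 0 2 + A.M i 2 0 else 0)
            + (if (0:Fin 3) ∉ labelsUnder A.toToricConstellation i then
                A.M i 1 2 + A.M i 2 1 else 0)) := by
    rw [R, rab, rab, rab]
    split_ifs <;> ring
  have hS3 : (if (2:Fin 3) ∉ labelsUnder A.toToricConstellation i then A.m i else 0)
        + (if (1:Fin 3) ∉ labelsUnder A.toToricConstellation i then A.m i else 0)
        + (if (0:Fin 3) ∉ labelsUnder A.toToricConstellation i then A.m i else 0)
      = (3 - (((A.toToricConstellation.labelsUnder i)).card : ℤ)) * A.m i := by
    have u2 : (if (2:Fin 3) ∉ labelsUnder A.toToricConstellation i then A.m i else 0)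
        = (if (2:Fin 3) ∉ labelsUnder A.toToricConstellation i then (1:ℤ) else 0)
          * A.m i := by split <;> ring
    have u1 : (if (1:Fin 3) ∉ labelsUnder A.toToricConstellation i then A.m i else 0)
        = (if (1:Fin 3) ∉ labelsUnder A.toToricConstellation i then (1:ℤ) else 0)
          * A.m i := by split <;> ring
    have u0 : (if (0:Fin 3) ∉ labelsUnder A.toToricConstellation i then A.m i else 0)
        = (if (0:Fin 3) ∉ labelsUnder A.toToricConstellation i then (1:ℤ) else 0)
          * A.m i := by split <;> ring
    rw [u2, u1, u0]
    linear_combination A.m i * S_key (A.toToricConstellation.labelsUnder i)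
  unfold chi D T
  rw [hR, h1, h2, h3]
  linear_combination -hkey + hS3 + A.m i * hB
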